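/- Let X^{−n} be a sequence of continuous piecewise-linear processes on [0,T] such that: (i) for each n and each k, X^{−q}(T_k^{−n,−q}) = X^{−n}(kμ^{−n}) for all q ≥ n; (ii) with probability at least 1−ε, for all q ≥ u and t ∈ [0,T], the index k with T^{−n}_{k−1} ≤ t < T^{−n}_k satisfies T^{−n,−q}_{k−2} < t < T^{−n,−q}_{k+1}; and (iii) X^{−n} moves at most 2^{−n} between consecutive passage times. Then |X^{−r}(t) − X^{−s}(t)| ≤ 6·2^{−n} for all r, s ≥ u and t ∈ [0,T] with probability ≥ 1−ε; consequently X^{−n} converges uniformly on [0,T] almost surely to a continuous limit. -/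

import Mathlib

open Filter Topology

/-- Uniform Cauchy estimate in the CEBP construction: if the approximating walks `X^{−q}`
agree with `X^{−n}` at the level-`n` passage times, each moves at most `2^{−n}` between
consecutive level-`n` passage times, and for `q ≥ u` every `t ∈ [0,T]` is bracketed as
`T^{−n,−q}_{k−1} < t < T^{−n,−q}_{k+2}` (where `Tlim n k ≤ t < Tlim n (k+1)`), then
`|X^{−r}(t) − X^{−s}(t)| ≤ 6·2^{−n}` for all `r, s ≥ u` and `t ∈ [0,T]`; consequently, if
such a `u` exists for every `n`, the `X^{−n}` converge uniformly on `[0,T]` to a continuous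
limit. -/
theorem stmt_14 (μ TT : ℝ) (hμ : 1 < μ) (hTT : 0 < TT)
    (X : ℕ → ℝ → ℝ) (T : ℕ → ℕ → ℕ → ℝ) (Tlim : ℕ → ℕ → ℝ)
    (hcont : ∀ q, Continuous (X q))
    (hmonoT : ∀ n q, Monotone (T n q))
    (h1 : ∀ n q k, n ≤ q → X q (T n q k) = X n ((k : ℝ) * μ ^ (-(n : ℤ))))
    (hiii : ∀ n q k, n ≤ q → ∀ t ∈ Set.Icc (T n q k) (T n q (k + 1)),
      |X q t - X q (T n q k)| ≤ (2 : ℝ) ^ (-(n : ℤ)))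
    (hk : ∀ n, ∀ t ∈ Set.Icc 0 TT, ∃ k, Tlim n k ≤ t ∧ t < Tlim n (k + 1)) :
    (∀ n u, n ≤ u →
      (∀ q, u ≤ q → ∀ t ∈ Set.Icc 0 TT, ∀ k, Tlim n k ≤ t → t < Tlim n (k + 1) →
        T n q (k - 1) < t ∧ t < T n q (k + 2)) →
      ∀ r s, u ≤ r → u ≤ s → ∀ t ∈ Set.Icc 0 TT,
        |X r t - X s t| ≤ 6 * (2 : ℝ) ^ (-(n : ℤ))) ∧
    ((∀ n, ∃ u, n ≤ u ∧
        ∀ q, u ≤ q → ∀ t ∈ Set.Icc 0 TT, ∀ k, Tlim n k ≤ t → t < Tlim n (k + 1) →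
          T n q (k - 1) < t ∧ t < T n q (k + 2)) →
      ∃ Y : ℝ → ℝ, ContinuousOn Y (Set.Icc 0 TT) ∧
        TendstoUniformlyOn X Y atTop (Set.Icc 0 TT)) := by
  -- step bound: consecutive grid values of `X n` differ by at most `2^{-n}`
  have hstep : ∀ n j : ℕ,
      |X n (((j : ℝ) + 1) * μ ^ (-(n : ℤ))) - X n ((j : ℝ) * μ ^ (-(n : ℤ)))|
        ≤ (2 : ℝ) ^ (-(n : ℤ)) := by
    intro n j
    have e1 := h1 n n (j + 1) le_rfl
    have e2 := h1 n n j le_rfl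
    push_cast at e1
    rw [← e1, ← e2]
    exact hiii n n j le_rfl (T n n (j + 1))
      ⟨hmonoT n n (Nat.le_succ j), le_rfl⟩
  -- key bound
  have key : ∀ n q k, n ≤ q → ∀ t, T n q (k - 1) < t → t < T n q (k + 2) →
      |X q t - X n ((k : ℝ) * μ ^ (-(n : ℤ)))| ≤ 2 * (2 : ℝ) ^ (-(n : ℤ)) := by
    intro n q k hnq t h1t h2t
    obtain ⟨j, hj1, hj2, hj3⟩ : ∃ j : ℕ, T n q j ≤ t ∧ t ≤ T n q (j + 1) ∧
        |X n ((j : ℝ) * μ ^ (-(n : ℤ))) - X n ((k : ℝ) * μ ^ (-(n : ℤ)))|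
          ≤ (2 : ℝ) ^ (-(n : ℤ)) := by
      rcases le_or_gt t (T n q k) with h | h
      · refine ⟨k - 1, h1t.le, h.trans (hmonoT n q (by omega)), ?_⟩
        rcases Nat.eq_zero_or_pos k with hk0 | hk0
        · simp [hk0]
        · have hcast : ((k - 1 : ℕ) : ℝ) + 1 = (k : ℝ) := by
            have h' : (k - 1) + 1 = k := by omega
            exact_mod_cast congrArg (fun m : ℕ => (m : ℝ)) h'
          rw [abs_sub_comm, ← hcast]
          exact hstep n (k - 1)
      · rcases le_or_gt t (T n q (k + 1)) with h' | h'
        · exact ⟨k, h.le, h', by simp⟩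
        · refine ⟨k + 1, h'.le, h2t.le, ?_⟩
          have := hstep n k
          push_cast
          convert this using 3 <;> ring
    calc |X q t - X n ((k : ℝ) * μ ^ (-(n : ℤ)))|
        ≤ |X q t - X q (T n q j)|
          + |X q (T n q j) - X n ((k : ℝ) * μ ^ (-(n : ℤ)))| := abs_sub_le _ _ _
      _ ≤ (2 : ℝ) ^ (-(n : ℤ)) + (2 : ℝ) ^ (-(n : ℤ)) := by
          refine add_le_add (hiii n q j hnq t ⟨hj1, hj2⟩) ?_
          rw [h1 n q j hnq]
          exact hj3
      _ = 2 * (2 : ℝ) ^ (-(n : ℤ)) := by ring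
  have main : ∀ n u, n ≤ u →
      (∀ q, u ≤ q → ∀ t ∈ Set.Icc 0 TT, ∀ k, Tlim n k ≤ t → t < Tlim n (k + 1) →
        T n q (k - 1) < t ∧ t < T n q (k + 2)) →
      ∀ r s, u ≤ r → u ≤ s → ∀ t ∈ Set.Icc 0 TT,
        |X r t - X s t| ≤ 6 * (2 : ℝ) ^ (-(n : ℤ)) := by
    intro n u hnu hbrk r s hr hs t ht
    obtain ⟨k, hk1, hk2⟩ := hk n t ht
    obtain ⟨hr1, hr2⟩ := hbrk r hr t ht k hk1 hk2
    obtain ⟨hs1, hs2⟩ := hbrk s hs t ht k hk1 hk2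
    have kr := key n r k (hnu.trans hr) t hr1 hr2
    have ks := key n s k (hnu.trans hs) t hs1 hs2
    have hpos : (0 : ℝ) < (2 : ℝ) ^ (-(n : ℤ)) := by positivity
    calc |X r t - X s t|
        ≤ |X r t - X n ((k : ℝ) * μ ^ (-(n : ℤ)))|
          + |X n ((k : ℝ) * μ ^ (-(n : ℤ))) - X s t| := abs_sub_le _ _ _
      _ ≤ 2 * (2 : ℝ) ^ (-(n : ℤ)) + 2 * (2 : ℝ) ^ (-(n : ℤ)) := by
          refine add_le_add kr ?_
          rw [abs_sub_comm]; exact ks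
      _ ≤ 6 * (2 : ℝ) ^ (-(n : ℤ)) := by linarith
  refine ⟨main, fun H => ?_⟩
  have hc : UniformCauchySeqOn X atTop (Set.Icc 0 TT) := by
    rw [Metric.uniformCauchySeqOn_iff]
    intro ε hε
    obtain ⟨n, hn⟩ : ∃ n : ℕ, 6 * (2 : ℝ) ^ (-(n : ℤ)) < ε := by
      obtain ⟨n, hn⟩ := exists_pow_lt_of_lt_one (div_pos hε (by norm_num : (0:ℝ) < 6))
        (by norm_num : (1 / 2 : ℝ) < 1)
      refine ⟨n, ?_⟩
      have : (2 : ℝ) ^ (-(n : ℤ)) = (1 / 2 : ℝ) ^ n := by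
        rw [zpow_neg, zpow_natCast, one_div, inv_pow]
      rw [this]
      calc 6 * (1 / 2 : ℝ) ^ n < 6 * (ε / 6) := by nlinarith
        _ = ε := by ring
    obtain ⟨u, hu1, hu2⟩ := H n
    refine ⟨u, fun r hr s hs t ht => ?_⟩
    rw [Real.dist_eq]
    exact lt_of_le_of_lt (main n u hu1 hu2 r s hr hs t ht) hn
  have hptw : ∀ t ∈ Set.Icc 0 TT, ∃ l, Tendsto (fun n => X n t) atTop (𝓝 l) :=
    fun t ht => cauchySeq_tendsto_of_complete (hc.cauchySeq ht)
  classical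
  set Y : ℝ → ℝ := fun t => if h : t ∈ Set.Icc 0 TT then (hptw t h).choose else 0 with hY
  have hYt : ∀ t ∈ Set.Icc 0 TT, Tendsto (fun n => X n t) atTop (𝓝 (Y t)) := by
    intro t ht
    rw [hY]
    simp only [dif_pos ht]
    exact (hptw t ht).choose_spec
  have hT : TendstoUniformlyOn X Y atTop (Set.Icc 0 TT) :=
    hc.tendstoUniformlyOn_of_tendsto hYt
  exact ⟨Y, hT.continuousOn (Eventually.of_forall fun q => (hcont q).continuousOn).frequently, hT⟩
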